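/- The yes/no model Fyn is fairly terminating: every fair run of Fyn is finite. -/
import Mathlib


/-- The two roles of the yes/no model. -/
inductive YNRole where
  | yes
  | no
deriving DecidableEq

/-- States of the yes/no model `Fyn`: `(m, b, Ye, Ne)`, where Boolean `1` is `true` and
`0` is `false`. -/
abbrev FynState := ℕ × Bool × Bool × Bool

/-- Enabled roles of `Fyn`: `Yes` is enabled iff `Ye = 1`, `No` is enabled iff `Ne = 1`. -/
def FynER : FynState → Finset YNRole := fun s =>
  (if s.2.2.1 = true then {YNRole.yes} else ∅) ∪ (if s.2.2.2 = true then {YNRole.no} else ∅)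

/-- The transitions of the yes/no model `Fyn`. -/
inductive FynStep : FynState → YNRole → FynState → Prop where
  | r1 (m : ℕ) (h : 0 < m) :
      FynStep (m, true, true, true) YNRole.yes (m, false, true, true)
  | r2 (m : ℕ) (h : 0 < m) :
      FynStep (m, false, true, true) YNRole.yes (m, false, true, true)
  | r3 (m : ℕ) (h : 0 < m) :
      FynStep (m, false, true, true) YNRole.no (m - 1, true, true, true)
  | r4 (m : ℕ) :
      FynStep (m, true, true, true) YNRole.no (m, true, true, true)
  | r5 :
      FynStep (1, false, false, true) YNRole.no (0, true, false, true)
  | r6 (m : ℕ) (b Ne : Bool) (h : m ≤ 1) :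
      FynStep (m, b, true, Ne) YNRole.yes (m, b, false, Ne)
  | r7 (b Ye : Bool) :
      FynStep (0, b, Ye, true) YNRole.no (0, b, Ye, false)

private lemma fyn_src {s s' : FynState} {ρ} (h : FynStep s ρ s') :
    s.2.2.1 = true ∨ s.2.2.2 = true := by
  cases h <;> simp

private lemma fyn_yf {s s' : FynState} {ρ} (h : FynStep s ρ s') (hy : s.2.2.1 = false) :
    s'.1 = 0 ∧ s'.2.2.1 = false := by
  cases h <;> simp_all

private lemma fyn_yf0 {s s' : FynState} {ρ} (h : FynStep s ρ s') (hy : s.2.2.1 = false)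
    (hm : s.1 = 0) : s'.2.2.1 = false ∧ s'.2.2.2 = false := by
  cases h <;> simp_all

private lemma fyn_nf {s s' : FynState} {ρ} (h : FynStep s ρ s') (hn : s.2.2.2 = false) :
    s'.2.2.1 = false := by
  cases h <;> simp_all

private lemma fyn_mle {s s' : FynState} {ρ} (h : FynStep s ρ s') (hy' : s'.2.2.1 = true)
    (hn' : s'.2.2.2 = true) : s'.1 ≤ s.1 := by
  cases h <;> simp_all <;> omega

private lemma fyn_zero {s s' : FynState} {ρ} (h : FynStep s ρ s') (hm : s.1 = 0)
    (hy' : s'.2.2.1 = true) (hn' : s'.2.2.2 = true) : ρ = YNRole.no := by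
  cases h <;> simp_all

private lemma fyn_bf {s s' : FynState} {ρ} (h : FynStep s ρ s') (hb : s.2.1 = false)
    (hm : s'.1 = s.1) (h0 : 0 < s.1)
    (hy' : s'.2.2.1 = true) (hn' : s'.2.2.2 = true) :
    ρ = YNRole.yes ∧ s'.2.1 = false := by
  cases h <;> simp_all <;> omega

private lemma fyn_bt {s s' : FynState} {ρ} (h : FynStep s ρ s') (hb : s.2.1 = true)
    (hb' : s'.2.1 = true) (h0 : 0 < s.1)
    (hy' : s'.2.2.1 = true) (hn' : s'.2.2.2 = true) : ρ = YNRole.no := by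
  cases h <;> simp_all

/-- The yes/no model `Fyn` is fairly terminating: every fair run is finite, i.e., there is
no fair infinite run (finite runs are always fair). An infinite run is a sequence of
consecutive labeled transitions; it is fair if every role enabled at any point is
eventually taken. -/
theorem fyn_fairly_terminating :
    ∀ (st : ℕ → FynState) (lb : ℕ → YNRole),
      (∀ n, FynStep (st n) (lb n) (st (n + 1))) →
      ¬ (∀ n ρ, ρ ∈ FynER (st n) → ∃ m, n ≤ m ∧ lb m = ρ) := by

  intro st lb hstep hfair
  -- Ye stays true forever
  have hyt : ∀ n, (st n).2.2.1 = true := by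
    intro n
    by_contra h
    rw [Bool.not_eq_true] at h
    obtain ⟨hm1, hy1⟩ := fyn_yf (hstep n) h
    obtain ⟨hy2, hn2⟩ := fyn_yf0 (hstep (n + 1)) hy1 hm1
    rcases fyn_src (hstep (n + 2)) with h' | h' <;> simp_all
  -- Ne stays true forever
  have hnt : ∀ n, (st n).2.2.2 = true := by
    intro n
    by_contra h
    rw [Bool.not_eq_true] at h
    have := fyn_nf (hstep n) h
    simp [hyt (n + 1)] at this
  have hyes : ∀ n, YNRole.yes ∈ FynER (st n) := by
    intro n; simp [FynER, hyt n]
  have hno : ∀ n, YNRole.no ∈ FynER (st n) := by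
    intro n; simp [FynER, hnt n]
  have hmle : ∀ n, (st (n + 1)).1 ≤ (st n).1 := fun n => fyn_mle (hstep n) (hyt _) (hnt _)
  have hanti : ∀ a b, a ≤ b → (st b).1 ≤ (st a).1 := by
    intro a b hab
    induction b, hab using Nat.le_induction with
    | base => exact le_refl _
    | succ b hb ih => exact (hmle b).trans ih
  obtain ⟨N, hNmem⟩ := Nat.sInf_mem (s := Set.range fun n => (st n).1) ⟨(st 0).1, 0, rfl⟩
  have hmin : ∀ n, (st N).1 ≤ (st n).1 := fun n => by
    have h' : (st N).1 = sInf (Set.range fun n => (st n).1) := hNmem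
    rw [h']; exact Nat.sInf_le ⟨n, rfl⟩
  have hconst : ∀ n, N ≤ n → (st n).1 = (st N).1 :=
    fun n h => le_antisymm (hanti N n h) (hmin n)
  rcases Nat.eq_zero_or_pos (st N).1 with hM | hM
  · -- m ≡ 0: only rule r4 (label no) fires, contradicting fairness of yes
    have hlab : ∀ n, N ≤ n → lb n = YNRole.no := fun n h =>
      fyn_zero (hstep n) (by rw [hconst n h, hM]) (hyt _) (hnt _)
    obtain ⟨k, hk, hlk⟩ := hfair N YNRole.yes (hyes N)
    rw [hlab k hk] at hlk
    exact YNRole.noConfusion hlk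
  · by_cases hb : ∃ n, N ≤ n ∧ (st n).2.1 = false
    · -- b becomes false: then only r2 (label yes) fires ever after
      obtain ⟨n0, hn0, hbf⟩ := hb
      have hbfall : ∀ k, n0 ≤ k → (st k).2.1 = false := by
        intro k hk
        induction k, hk using Nat.le_induction with
        | base => exact hbf
        | succ k hk ih =>
          exact (fyn_bf (hstep k) ih
            (by rw [hconst (k + 1) (by omega), hconst k (le_trans hn0 hk)])
            (by rw [hconst k (le_trans hn0 hk)]; exact hM) (hyt _) (hnt _)).2
      have hlab : ∀ k, n0 ≤ k → lb k = YNRole.yes := fun k hk =>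
        (fyn_bf (hstep k) (hbfall k hk)
          (by rw [hconst (k + 1) (by omega), hconst k (le_trans hn0 hk)])
          (by rw [hconst k (le_trans hn0 hk)]; exact hM) (hyt _) (hnt _)).1
      obtain ⟨k, hk, hlk⟩ := hfair n0 YNRole.no (hno n0)
      rw [hlab k hk] at hlk
      exact YNRole.noConfusion hlk
    · -- b stays true from N on: only r4 (label no) fires, contradicting fairness of yes
      push_neg at hb
      have hbt : ∀ n, N ≤ n → (st n).2.1 = true := by
        intro n hn
        have := hb n hn
        exact Bool.not_eq_false _ ▸ (by simpa using this)
      have hlab : ∀ k, N ≤ k → lb k = YNRole.no := fun k hk =>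
        fyn_bt (hstep k) (hbt k hk) (hbt (k + 1) (by omega))
          (by rw [hconst k hk]; exact hM) (hyt _) (hnt _)
      obtain ⟨k, hk, hlk⟩ := hfair N YNRole.yes (hyes N)
      rw [hlab k hk] at hlk
      exact YNRole.noConfusion hlk
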